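/- Let θ ∈ (0,1). Define the buyer's ex-post payoff u_B(ω, e) for ω ∈ [0,1] and e ∈ [−2θ, 2θ] by: u_B(ω,e) = ω − (θ·ω + e) if 0 ≤ e ≤ θ − θ·ω; u_B(ω,e) = ω − θ if θ − θ·ω < e ≤ 2θ; and u_B(ω,e) = 0 if e < 0. Then the buyer's ex-ante expected payoff satisfies Π_B(θ) = ∫₀¹ ∫_{−2θ}^{2θ} u_B(ω,e) · (1/(4θ)) de dω = (6 − 11θ)/24. -/

import Mathlib

open intervalIntegral
open MeasureTheory Set

/-- Buyer's ex-post payoff: `ω - (θω + e)` in the under-budget region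
`0 ≤ e ≤ θ - θω`, `ω - θ` in the budget-capped region `θ - θω < e`,
and `0` (no trade) when `e < 0`. -/
noncomputable def uB (θ ω e : ℝ) : ℝ :=
  if e < 0 then 0
  else if e ≤ θ - θ * ω then ω - (θ * ω + e)
  else ω - θ

lemma inner_eq (θ ω : ℝ) (hθ : 0 < θ) (hθ1 : θ < 1) (hω : 0 ≤ ω) (hω1 : ω ≤ 1) :
    ∫ e in (-(2*θ))..(2*θ), uB θ ω e
      = (ω - θ*ω) * (θ*(1-ω)) - (θ*(1-ω))^2/2 + (2*θ - θ*(1-ω)) * (ω - θ) := by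
  set a : ℝ := θ * (1 - ω) with ha
  have haeq : θ - θ * ω = a := by ring
  have ha0 : 0 ≤ a := mul_nonneg hθ.le (by linarith)
  have ha2 : a ≤ 2*θ := by nlinarith
  have hne : ∀ᵐ e : ℝ, e ≠ (0:ℝ) := by
    refine ae_iff.2 ?_
    simpa using measure_singleton (0:ℝ)
  -- integrability pieces
  have i1 : IntervalIntegrable (uB θ ω) volume (-(2*θ)) 0 := by
    rw [intervalIntegrable_iff_integrableOn_Ioc_of_le (by linarith)]
    have h0 : IntegrableOn (fun _ : ℝ => (0:ℝ)) (Set.Ioc (-(2*θ)) 0) :=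
      integrableOn_const measure_Ioc_lt_top.ne
    refine h0.congr_fun_ae ?_
    filter_upwards [ae_restrict_mem measurableSet_Ioc, ae_restrict_of_ae hne] with e he hne'
    have : e < 0 := lt_of_le_of_ne he.2 hne'
    simp [uB, this]
  have i2 : IntervalIntegrable (uB θ ω) volume 0 a := by
    rw [intervalIntegrable_iff_integrableOn_Ioc_of_le ha0]
    have hc : IntegrableOn (fun e : ℝ => ω - (θ * ω + e)) (Set.Ioc 0 a) := by
      apply Continuous.integrableOn_Ioc; continuity
    refine hc.congr_fun (fun e he => ?_) measurableSet_Ioc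
    have h1 : ¬ e < 0 := not_lt.2 he.1.le
    have h2 : e ≤ θ - θ * ω := by rw [haeq]; exact he.2
    simp [uB, h1, h2]
  have i3 : IntervalIntegrable (uB θ ω) volume a (2*θ) := by
    rw [intervalIntegrable_iff_integrableOn_Ioc_of_le ha2]
    have hc : IntegrableOn (fun _ : ℝ => ω - θ) (Set.Ioc a (2*θ)) :=
      integrableOn_const measure_Ioc_lt_top.ne
    refine hc.congr_fun (fun e he => ?_) measurableSet_Ioc
    have h1 : ¬ e < 0 := not_lt.2 (le_trans ha0 he.1.le)
    have h2 : ¬ e ≤ θ - θ * ω := by rw [haeq]; exact not_le.2 he.1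
    simp [uB, h1, h2]
  have split : ∫ e in (-(2*θ))..(2*θ), uB θ ω e
      = (∫ e in (-(2*θ))..(0:ℝ), uB θ ω e) + (∫ e in (0:ℝ)..a, uB θ ω e)
        + (∫ e in a..(2*θ), uB θ ω e) := by
    have h23 := integral_add_adjacent_intervals i2 i3
    have h12 := integral_add_adjacent_intervals i1 (i2.trans i3)
    linarith
  have e1 : (∫ e in (-(2*θ))..(0:ℝ), uB θ ω e) = 0 := by
    rw [integral_of_le (by linarith), MeasureTheory.integral_Ioc_eq_integral_Ioo]
    rw [setIntegral_congr_fun measurableSet_Ioo (g := fun _ => (0:ℝ))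
      (fun e he => by simp [uB, he.2])]
    simp
  have e2 : (∫ e in (0:ℝ)..a, uB θ ω e) = (ω - θ*ω) * a - a^2/2 := by
    have : (∫ e in (0:ℝ)..a, uB θ ω e) = ∫ e in (0:ℝ)..a, ((ω - θ*ω) - e) := by
      rw [integral_of_le ha0, integral_of_le ha0]
      refine setIntegral_congr_fun measurableSet_Ioc (fun e he => ?_)
      have h1 : ¬ e < 0 := not_lt.2 he.1.le
      have h2 : e ≤ θ - θ * ω := by rw [haeq]; exact he.2
      simp [uB, h1, h2]; ring
    rw [this, integral_sub intervalIntegrable_const intervalIntegrable_id,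
        intervalIntegral.integral_const, integral_id]
    simp [smul_eq_mul]; ring
  have e3 : (∫ e in a..(2*θ), uB θ ω e) = (2*θ - a) * (ω - θ) := by
    have : (∫ e in a..(2*θ), uB θ ω e) = ∫ _e in a..(2*θ), (ω - θ) := by
      rw [integral_of_le ha2, integral_of_le ha2]
      refine setIntegral_congr_fun measurableSet_Ioc (fun e he => ?_)
      have h1 : ¬ e < 0 := not_lt.2 (le_trans ha0 he.1.le)
      have h2 : ¬ e ≤ θ - θ * ω := by rw [haeq]; exact not_le.2 he.1
      simp [uB, h1, h2]
    rw [this, intervalIntegral.integral_const]; simp [smul_eq_mul]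
  rw [split, e1, e2, e3]; ring

/-- Proposition (Buyer's Payoff Under Minimal Separation): with type
`ω ~ U(0,1)` and payment error `e ~ U(-2θ, 2θ)` (density `1/(4θ)`), the
buyer's ex-ante expected payoff equals `(6 - 11θ)/24`. -/
theorem buyer_payoff_minimal_separation (θ : ℝ) (hθ : θ ∈ Set.Ioo (0 : ℝ) 1) :
    ∫ ω in (0 : ℝ)..1, ∫ e in (-(2 * θ))..(2 * θ), uB θ ω e * (1 / (4 * θ)) =
      (6 - 11 * θ) / 24 := by
  obtain ⟨h0, h1⟩ := hθ
  have hθne : θ ≠ 0 := ne_of_gt h0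
  have key : ∫ ω in (0 : ℝ)..1, ∫ e in (-(2 * θ))..(2 * θ), uB θ ω e * (1 / (4 * θ))
      = ∫ ω in (0 : ℝ)..1, (-3*θ/8 + (2-θ)/4 * ω + θ/8 * ω^2) := by
    rw [integral_of_le zero_le_one, integral_of_le zero_le_one]
    refine setIntegral_congr_fun measurableSet_Ioc (fun ω hω => ?_)
    rw [intervalIntegral.integral_mul_const,
        inner_eq θ ω h0 h1 hω.1.le hω.2]
    field_simp
    ring
  rw [key,
    intervalIntegral.integral_add
      (by apply Continuous.intervalIntegrable; continuity)
      (by apply Continuous.intervalIntegrable; continuity),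
    intervalIntegral.integral_add
      (by apply Continuous.intervalIntegrable; continuity)
      (by apply Continuous.intervalIntegrable; continuity),
    intervalIntegral.integral_const, intervalIntegral.integral_const_mul,
    intervalIntegral.integral_const_mul, integral_id, integral_pow]
  norm_num
  ring
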